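/- Let T be a pruned tree on a non-empty countable set A and let X be the set of infinite branches of T with its cylinder-set topology. If X is uncountable and B ⊆ X is a Bernstein set, then the game Γ(1_B) for the indicator function 1_B : X → ℝ is not determined, i.e., neither Player I nor Player II has a winning strategy in Γ(1_B). -/

import Mathlib

open Filter Topology

/-- The initial segment `(x₀, …, x_{n-1})` of an infinite sequence `x`. -/
def initSeg {β : Type*} (x : ℕ → β) (n : ℕ) : List β :=
  List.ofFn fun i : Fin n => x i

/-- `T` is a pruned tree on `A`: it contains the empty sequence, is closed under
prefixes, and every element has a proper extension in `T`. -/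
def IsPrunedTree {A : Type*} (T : Set (List A)) : Prop :=
  [] ∈ T ∧ (∀ s ∈ T, ∀ t : List A, t <+: s → t ∈ T) ∧ ∀ s ∈ T, ∃ a : A, s ++ [a] ∈ T

/-- The space `X` of infinite branches of the tree `T`, topologized as a subspace of
the product `ℕ → A` (with `A` discrete); this is exactly the cylinder-set topology. -/
abbrev Branches {A : Type*} (T : Set (List A)) : Type _ :=
  {x : ℕ → A // ∀ n : ℕ, initSeg x n ∈ T}

/-- The cylinder set `O(s)` of all branches with initial segment `s`. -/
def cyl {A : Type*} (T : Set (List A)) (s : List A) : Set (Branches T) :=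
  {x | initSeg x.val s.length = s}

/-- `f : X → ℝ` is a limsup function: there is `u` defined on finite sequences with
`f x = limsup_{t → ∞} u (x₀, …, x_t)` for every branch `x` (the limsup being computed
in the extended reals and required to equal the real number `f x`). -/
def IsLimsupFunction {A : Type*} {T : Set (List A)} (f : Branches T → ℝ) : Prop :=
  ∃ u : List A → ℝ, ∀ x : Branches T,
    (f x : EReal) = Filter.limsup (fun t : ℕ => (u (initSeg x.val (t + 1)) : EReal)) Filter.atTop

/-- `f` is of Baire class 1: a pointwise limit of continuous functions. -/
def BaireClassOne {X : Type*} [TopologicalSpace X] (f : X → ℝ) : Prop :=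
  ∃ g : ℕ → X → ℝ, (∀ n, Continuous (g n)) ∧
    ∀ x, Filter.Tendsto (fun n => g n x) Filter.atTop (nhds (f x))

/-- A Cantor set: a subset homeomorphic to the Cantor space `2^ℕ`. -/
def IsCantorSet {X : Type*} [TopologicalSpace X] (C : Set X) : Prop :=
  Nonempty (C ≃ₜ (ℕ → Bool))

/-- A Bernstein set: neither it nor its complement contains a nonempty perfect set. -/
def IsBernsteinSet {X : Type*} [TopologicalSpace X] (B : Set X) : Prop :=
  ∀ P : Set X, Perfect P → P.Nonempty → ¬ P ⊆ B ∧ ¬ P ⊆ Bᶜ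

/-- A co-analytic set: the complement of an analytic set. -/
def IsCoanalytic {X : Type*} [TopologicalSpace X] (s : Set X) : Prop :=
  MeasureTheory.AnalyticSet sᶜ

/-- The sequence of moves produced by Player I's strategy `σ` against the sequence `v`
of moves of Player II: Player I's `n`-th move depends on `(v₀, …, v_{n-1})`. -/
def playI {A M : Type*} (σ : List M → A) (v : ℕ → M) : ℕ → A :=
  fun n => σ (initSeg v n)

/-- Player II has a winning strategy in the game `Γ(f)`: a strategy for Player II assigns
to each position `(x₀, …, x_t)` of moves of Player I a real number `v_t` (Player II's own
previous moves being determined), and it is winning if for every run, i.e. every branch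
`x` that Player I may produce, `f x = limsup_{t → ∞} v_t`. -/
def PlayerIIWinsGamma {A : Type*} {T : Set (List A)} (f : Branches T → ℝ) : Prop :=
  ∃ τ : List A → ℝ, ∀ x : Branches T,
    (f x : EReal) = Filter.limsup (fun t : ℕ => (τ (initSeg x.val (t + 1)) : EReal)) Filter.atTop

/-- Player I has a winning strategy in the game `Γ_R(f)` where Player II's moves are
restricted to `R`: a strategy for Player I assigns to each position `(v₀, …, v_{n-1})` of
moves of Player II a point of `A`, and it is winning if against every sequence of moves
of Player II in `R` the moves of Player I are legal (all initial segments lie in `T`) and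
the resulting branch `x` satisfies `f x ≠ limsup_{t → ∞} v_t`. -/
def PlayerIWinsGammaR {A : Type*} {T : Set (List A)} (R : Set ℝ) (f : Branches T → ℝ) :
    Prop :=
  ∃ σ : List ℝ → A, ∀ v : ℕ → ℝ, (∀ t, v t ∈ R) →
    ∃ h : ∀ n : ℕ, initSeg (playI σ v) n ∈ T,
      (f ⟨playI σ v, h⟩ : EReal) ≠ Filter.limsup (fun t : ℕ => (v t : EReal)) Filter.atTop

/-- Player I has a winning strategy in the game `Γ(f)`. -/
def PlayerIWinsGamma {A : Type*} {T : Set (List A)} (f : Branches T → ℝ) : Prop :=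
  ∃ σ : List ℝ → A, ∀ v : ℕ → ℝ,
    ∃ h : ∀ n : ℕ, initSeg (playI σ v) n ∈ T,
      (f ⟨playI σ v, h⟩ : EReal) ≠ Filter.limsup (fun t : ℕ => (v t : EReal)) Filter.atTop

/-- Player II has a winning strategy in the game `Γ'(f)`, in which Player II's moves are
pairs `(v_t, w_t)` of reals and Player II wins a run iff
`f x = limsup_{t → ∞} v_t = liminf_{t → ∞} w_t`. -/
def PlayerIIWinsGamma' {A : Type*} {T : Set (List A)} (f : Branches T → ℝ) : Prop :=
  ∃ τ : List A → ℝ × ℝ, ∀ x : Branches T,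
    (f x : EReal) =
      Filter.limsup (fun t : ℕ => ((τ (initSeg x.val (t + 1))).1 : EReal)) Filter.atTop ∧
    (f x : EReal) =
      Filter.liminf (fun t : ℕ => ((τ (initSeg x.val (t + 1))).2 : EReal)) Filter.atTop

/-- Player I has a winning strategy in the game `Γ'(f)`. -/
def PlayerIWinsGamma' {A : Type*} {T : Set (List A)} (f : Branches T → ℝ) : Prop :=
  ∃ σ : List (ℝ × ℝ) → A, ∀ v : ℕ → ℝ × ℝ,
    ∃ h : ∀ n : ℕ, initSeg (playI σ v) n ∈ T,
      ¬ ((f ⟨playI σ v, h⟩ : EReal) =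
            Filter.limsup (fun t : ℕ => ((v t).1 : EReal)) Filter.atTop ∧
         (f ⟨playI σ v, h⟩ : EReal) =
            Filter.liminf (fun t : ℕ => ((v t).2 : EReal)) Filter.atTop)

section AuxGamma

open Filter Topology Set Function

private lemma continuous_initSeg_comp' {A β : Type*} [TopologicalSpace A] [DiscreteTopology A]
    [TopologicalSpace β] (n : ℕ) (φ : List A → β) :
    Continuous fun x : ℕ → A => φ (initSeg x n) := by
  have h : (fun x : ℕ → A => φ (initSeg x n))
      = (fun c : Fin n → A => φ (List.ofFn c)) ∘ fun x (i : Fin n) => x i := rfl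
  rw [h]
  exact continuous_of_discreteTopology.comp (continuous_pi fun i => continuous_apply _)

private lemma perfect_range_of_cantor' {X : Type*} [TopologicalSpace X] [T2Space X]
    {e : (ℕ → Bool) → X} (he : Continuous e) (hinj : Function.Injective e) :
    Perfect (Set.range e) ∧ (Set.range e).Nonempty := by
  refine ⟨⟨(isCompact_range he).isClosed, ?_⟩, Set.range_nonempty e⟩
  rintro x ⟨a, rfl⟩
  have hne : Filter.NeBot (𝓝[≠] a) := by
    have htd : Tendsto (fun n => Function.update a n (!(a n))) atTop (𝓝[≠] a) := by
      rw [tendsto_nhdsWithin_iff]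
      constructor
      · rw [tendsto_pi_nhds]
        intro i
        refine tendsto_const_nhds.congr' ?_
        filter_upwards [eventually_gt_atTop i] with n hn
        exact (Function.update_of_ne (by omega) _ a).symm
      · filter_upwards with n
        intro hmem
        have := congrFun hmem n
        rw [Function.update_self] at this
        simp at this
    exact htd.neBot
  have hle : Filter.map e (𝓝[≠] a) ≤ 𝓝[≠] (e a) ⊓ Filter.principal (Set.range e) := by
    refine le_inf (le_inf ?_ ?_) ?_
    · exact (he.tendsto a).mono_left nhdsWithin_le_nhds
    · rw [Filter.le_principal_iff, Filter.mem_map]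
      filter_upwards [self_mem_nhdsWithin] with b hb
      exact fun hEq => hb (hinj hEq)
    · rw [Filter.le_principal_iff, Filter.mem_map]
      filter_upwards with b using Set.mem_range_self b
  exact Filter.neBot_of_le hle

private lemma isClopenable_union' {X : Type*} [TopologicalSpace X] [PolishSpace X] {s u : Set X}
    (hs : PolishSpace.IsClopenable s) (hu : PolishSpace.IsClopenable u) :
    PolishSpace.IsClopenable (s ∪ u) := by
  have h : s ∪ u = ⋃ n : ℕ, (if n = 0 then s else u) := by
    ext x
    simp only [Set.mem_iUnion, Set.mem_union]
    constructor
    · rintro (h | h)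
      · exact ⟨0, by simpa⟩
      · exact ⟨1, by simpa⟩
    · rintro ⟨n, hn⟩
      by_cases h0 : n = 0
      · left; simpa [h0] using hn
      · right; simpa [h0] using hn
  rw [h]
  exact PolishSpace.IsClopenable.iUnion fun n => by by_cases h0 : n = 0 <;> simp [h0, hs, hu]

private lemma isClopenable_of_countable' {X : Type*} [TopologicalSpace X] [PolishSpace X]
    [T1Space X] {s : Set X} (h : s.Countable) : PolishSpace.IsClopenable s := by
  rcases s.eq_empty_or_nonempty with rfl | hne
  · exact isOpen_empty.isClopenable
  · obtain ⟨f, rfl⟩ := h.exists_eq_range hne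
    have hr : Set.range f = ⋃ n : ℕ, {f n} := by
      ext x; simp [eq_comm]
    rw [hr]
    exact PolishSpace.IsClopenable.iUnion fun n => (isClosed_singleton).isClopenable

private lemma bernstein_no_uncountable_clopenable' {X : Type*} [tX : TopologicalSpace X]
    [h2X : T2Space X] {B S : Set X} (hB : IsBernsteinSet B)
    (hS : PolishSpace.IsClopenable S) (hunc : ¬ S.Countable) (hsub : S ⊆ B ∨ S ⊆ Bᶜ) :
    False := by
  obtain ⟨t', hle, hpol, hclosed, -⟩ := hS
  obtain ⟨f, hfS, hfc, hfi⟩ :=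
    @IsClosed.exists_nat_bool_injection_of_not_countable X t' hpol S hclosed hunc
  have hfc' : @Continuous _ _ _ tX f := by
    exact (continuous_iff_coinduced_le (t₂ := tX)).2
      (le_trans ((continuous_iff_coinduced_le (t₂ := t')).1 hfc) hle)
  obtain ⟨hperf, hne⟩ := @perfect_range_of_cantor' X tX h2X f hfc' hfi
  obtain ⟨h1, h2⟩ := hB _ hperf hne
  rcases hsub with hsub | hsub
  · exact h1 (hfS.trans hsub)
  · exact h2 (hfS.trans hsub)

private lemma limsup_coe_eq_zero' {v : ℕ → ℝ} (h : ∀ᶠ t in atTop, v t = 0) :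
    Filter.limsup (fun t : ℕ => (v t : EReal)) Filter.atTop = (0 : EReal) := by
  have h' : ∀ᶠ t in atTop, (v t : EReal) = (fun _ : ℕ => (0 : EReal)) t := by
    filter_upwards [h] with t ht; simp [ht]
  rw [Filter.limsup_congr h', Filter.limsup_const]

private lemma limsup_coe_eq_one' {v : ℕ → ℝ} (h01 : ∀ t, v t = 0 ∨ v t = 1)
    (h : ∃ᶠ t in atTop, v t = 1) :
    Filter.limsup (fun t : ℕ => (v t : EReal)) Filter.atTop = (1 : EReal) := by
  apply le_antisymm
  · refine Filter.limsup_le_of_le (by isBoundedDefault) ?_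
    filter_upwards with t
    rcases h01 t with ht | ht <;> rw [ht] <;> simp
  · apply Filter.le_limsup_of_frequently_le'
    apply h.mono
    intro t ht
    rw [ht]; simp

private lemma half_le_limsup' {u : ℕ → ℝ} (h : ∃ᶠ t in atTop, (1:ℝ)/2 ≤ u t) :
    ((1/2 : ℝ) : EReal) ≤ Filter.limsup (fun t : ℕ => (u t : EReal)) Filter.atTop := by
  apply Filter.le_limsup_of_frequently_le'
  apply h.mono
  intro t ht
  exact_mod_cast ht

private lemma limsup_le_half' {u : ℕ → ℝ} (h : ∀ᶠ t in atTop, u t < (1:ℝ)/2) :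
    Filter.limsup (fun t : ℕ => (u t : EReal)) Filter.atTop ≤ ((1/2 : ℝ) : EReal) := by
  refine Filter.limsup_le_of_le (by isBoundedDefault) ?_
  filter_upwards [h] with t ht
  exact_mod_cast ht.le

private lemma countable_eventually_false' :
    {b : ℕ → Bool | ∀ᶠ t in atTop, b t = false}.Countable := by
  have h : {b : ℕ → Bool | ∀ᶠ t in atTop, b t = false}
      ⊆ ⋃ N : ℕ, Set.range (fun (c : Fin N → Bool) (t : ℕ) =>
          if h : t < N then c ⟨t, h⟩ else false) := by
    intro b hb
    obtain ⟨N, hN⟩ := eventually_atTop.1 hb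
    refine Set.mem_iUnion.2 ⟨N, ⟨fun i => b i, ?_⟩⟩
    funext t
    by_cases ht : t < N
    · simp [ht]
    · simp only [ht, dif_neg, not_false_iff]
      exact (hN t (by omega)).symm
  exact Set.Countable.mono h (Set.countable_iUnion fun N => Set.countable_range _)

private lemma tendsto_tail_mod' (b₀ : ℕ → Bool) (c : Bool) :
    Tendsto (fun N : ℕ => (fun t => if t < N then b₀ t else c)) atTop (𝓝 b₀) := by
  rw [tendsto_pi_nhds]
  intro t
  refine tendsto_const_nhds.congr' ?_
  filter_upwards [eventually_gt_atTop t] with N hN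
  simp [hN]

end AuxGamma

/-- If `X` is uncountable and `B ⊆ X` is a Bernstein set, then the game `Γ(1_B)` is not
determined: neither player has a winning strategy. -/
theorem gamma_indicator_bernstein_not_determined
    {A : Type*} [Countable A] [Nonempty A] [TopologicalSpace A] [DiscreteTopology A]
    {T : Set (List A)} (hT : IsPrunedTree T)
    (hX : ¬ Countable (Branches T)) (B : Set (Branches T)) (hB : IsBernsteinSet B) :
    ¬ PlayerIWinsGamma (B.indicator fun _ => (1 : ℝ)) ∧
    ¬ PlayerIIWinsGamma (B.indicator fun _ => (1 : ℝ)) := by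
  classical
  letI : TopologicalSpace (List A) := ⊥
  haveI : DiscreteTopology (List A) := ⟨rfl⟩
  have hclosed : IsClosed {x : ℕ → A | ∀ n, initSeg x n ∈ T} := by
    have h : {x : ℕ → A | ∀ n, initSeg x n ∈ T}
        = ⋂ n, (fun x : ℕ → A => initSeg x n) ⁻¹' T := by
      ext x; simp [Set.mem_iInter]
    rw [h]
    exact isClosed_iInter fun n =>
      (isClosed_discrete T).preimage (continuous_initSeg_comp' n id)
  haveI : PolishSpace A := inferInstance
  haveI hPol : PolishSpace (Branches T) := hclosed.polishSpace
  have huniv : ¬ (Set.univ : Set (Branches T)).Countable := fun h =>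
    hX (Set.countable_univ_iff.1 h)
  constructor
  · -- Player I has no winning strategy
    rintro ⟨σ, hσ⟩
    choose hleg hne using hσ
    set vb : (ℕ → Bool) → ℕ → ℝ := fun b t => if b t then 1 else 0 with hvb
    set g : (ℕ → Bool) → Branches T := fun b => ⟨playI σ (vb b), hleg (vb b)⟩ with hgdef
    have hgc : Continuous g := by
      refine Continuous.subtype_mk ?_ _
      refine continuous_pi fun n => ?_
      have h : (fun b : ℕ → Bool => playI σ (vb b) n)
          = (fun c : Fin n → Bool => σ (List.ofFn fun i => if c i then (1:ℝ) else 0))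
            ∘ fun b (i : Fin n) => b i := rfl
      rw [h]
      exact continuous_of_discreteTopology.comp (continuous_pi fun i => continuous_apply _)
    set D := {b : ℕ → Bool | ∀ᶠ t in atTop, b t = false} with hDdef
    have hmem1 : ∀ b ∈ D, g b ∈ B := by
      intro b hb
      by_contra hbB
      have h0 : Filter.limsup (fun t : ℕ => (vb b t : EReal)) atTop = 0 :=
        limsup_coe_eq_zero' (hb.mono fun t ht => by simp [hvb, ht])
      refine hne (vb b) ?_
      rw [h0]
      have : g b ∉ B := hbB
      rw [hgdef] at this
      rw [Set.indicator_of_notMem this]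
      simp
    have hmem2 : ∀ b ∉ D, g b ∉ B := by
      intro b hb hbB
      rw [hDdef, Set.mem_setOf_eq, Filter.not_eventually] at hb
      have hfreq : ∃ᶠ t in atTop, vb b t = 1 := by
        refine hb.mono fun t ht => ?_
        have hbt : b t = true := by simpa using ht
        simp [hvb, hbt]
      have h01 : ∀ t, vb b t = 0 ∨ vb b t = 1 := fun t => by
        by_cases h : b t <;> simp [hvb, h]
      have h1 : Filter.limsup (fun t : ℕ => (vb b t : EReal)) atTop = 1 :=
        limsup_coe_eq_one' h01 hfreq
      refine hne (vb b) ?_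
      rw [h1]
      rw [hgdef] at hbB
      rw [Set.indicator_of_mem hbB]
      simp
    have hDc : D.Countable := countable_eventually_false'
    set K := Set.range g with hKdef
    set S := K \ (g '' D) with hSdef
    have hSsub : S ⊆ Bᶜ := by
      rintro y ⟨⟨b, rfl⟩, hyD⟩
      by_cases hbD : b ∈ D
      · exact absurd ⟨b, hbD, rfl⟩ hyD
      · exact hmem2 b hbD
    by_cases hSc : S.Countable
    · -- Baire category contradiction
      have hKc : K.Countable := by
        have hsub : K ⊆ S ∪ g '' D := fun y hy => by
          by_cases h : y ∈ g '' D
          · exact Or.inr h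
          · exact Or.inl ⟨hy, h⟩
        exact (hSc.union (hDc.image g)).mono hsub
      letI := TopologicalSpace.upgradeIsCompletelyMetrizable (ℕ → Bool)
      haveI : Countable ↥K := hKc.to_subtype
      have hcover : ⋃ y : ↥K, g ⁻¹' {y.val} = Set.univ := by
        refine Set.eq_univ_of_univ_subset fun b _ => ?_
        exact Set.mem_iUnion.2 ⟨⟨g b, Set.mem_range_self b⟩, rfl⟩
      obtain ⟨y₀, hy₀⟩ := nonempty_interior_of_iUnion_of_closed
        (fun y : ↥K => (isClosed_singleton).preimage hgc) hcover
      obtain ⟨b₀, hb₀⟩ := hy₀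
      have hUopen : IsOpen (interior (g ⁻¹' {y₀.val})) := isOpen_interior
      obtain ⟨N₁, hN₁⟩ :=
        ((tendsto_tail_mod' b₀ false).eventually (hUopen.eventually_mem hb₀)).exists
      obtain ⟨N₂, hN₂⟩ :=
        ((tendsto_tail_mod' b₀ true).eventually (hUopen.eventually_mem hb₀)).exists
      set b₁ : ℕ → Bool := fun t => if t < N₁ then b₀ t else false with hb₁def
      set b₂ : ℕ → Bool := fun t => if t < N₂ then b₀ t else true with hb₂def
      have hb₁D : b₁ ∈ D := by
        rw [hDdef, Set.mem_setOf_eq, eventually_atTop]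
        exact ⟨N₁, fun t ht => by simp [hb₁def, Nat.not_lt.2 ht]⟩
      have hb₂D : b₂ ∉ D := by
        rw [hDdef, Set.mem_setOf_eq, eventually_atTop]
        rintro ⟨M, hM⟩
        have := hM (max N₂ M) (le_max_right _ _)
        rw [hb₂def] at this
        simp [Nat.not_lt.2 (le_max_left N₂ M)] at this
      have hgb₁' := interior_subset hN₁
      have hgb₂' := interior_subset hN₂
      have hgb₁ : g b₁ = y₀.val := hgb₁'
      have hgb₂ : g b₂ = y₀.val := hgb₂'
      have h1 : y₀.val ∈ B := hgb₁ ▸ hmem1 b₁ hb₁D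
      have h2 : y₀.val ∉ B := hgb₂ ▸ hmem2 b₂ hb₂D
      exact h2 h1
    · -- perfect set contradiction
      have hKcl : IsClosed K := (isCompact_range hgc).isClosed
      have hclopS : PolishSpace.IsClopenable S := by
        have h1 : PolishSpace.IsClopenable (g '' D) := isClopenable_of_countable' (hDc.image g)
        have h2 : S = (Kᶜ ∪ g '' D)ᶜ := by
          rw [Set.compl_union, compl_compl, ← Set.diff_eq]
        rw [h2]
        exact (isClopenable_union' hKcl.isOpen_compl.isClopenable h1).compl
      exact bernstein_no_uncountable_clopenable' hB hclopS hSc (Or.inr hSsub)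
  · -- Player II has no winning strategy
    rintro ⟨τ, hτ⟩
    set S : ℕ → Set (Branches T) :=
      fun t => {x | (1:ℝ)/2 ≤ τ (initSeg x.val (t+1))} with hSdef
    have hSopen : ∀ t, IsOpen (S t) := by
      intro t
      have h : S t = (fun x : Branches T => initSeg x.val (t+1))
          ⁻¹' {l : List A | (1:ℝ)/2 ≤ τ l} := rfl
      rw [h]
      exact (isOpen_discrete _).preimage
        ((continuous_initSeg_comp' (t+1) id).comp continuous_subtype_val)
    have hmem : ∀ x : Branches T, x ∈ B ↔ ∃ᶠ t in atTop, x ∈ S t := by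
      intro x
      constructor
      · intro hx
        by_contra hc
        rw [Filter.not_frequently] at hc
        have hc' : ∀ᶠ t in atTop, τ (initSeg x.val (t+1)) < (1:ℝ)/2 := by
          refine hc.mono fun t ht => ?_
          simpa [hSdef, not_le] using ht
        have hle := limsup_le_half' hc'
        rw [← hτ x, Set.indicator_of_mem hx] at hle
        have : (1:ℝ) ≤ 1/2 := by exact_mod_cast hle
        linarith
      · intro hfreq
        by_contra hx
        have hge := half_le_limsup' (hfreq.mono fun t ht => ht)
        rw [← hτ x, Set.indicator_of_notMem hx] at hge
        have : (1:ℝ)/2 ≤ 0 := by exact_mod_cast hge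
        linarith
    have hBeq : B = (⋃ N : ℕ, (⋃ t : ℕ, ⋃ (_ : N ≤ t), S t)ᶜ)ᶜ := by
      ext x
      rw [Set.mem_compl_iff, Set.mem_iUnion]
      push_neg
      simp only [Set.notMem_compl_iff, Set.mem_iUnion]
      rw [hmem x, frequently_atTop]
      constructor
      · intro h N
        obtain ⟨t, ht, hx⟩ := h N
        exact ⟨t, ht, hx⟩
      · intro h N
        obtain ⟨t, ht, hx⟩ := h N
        exact ⟨t, ht, hx⟩
    have hclopB : PolishSpace.IsClopenable B := by
      rw [hBeq]
      refine PolishSpace.IsClopenable.compl ?_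
      refine PolishSpace.IsClopenable.iUnion fun N => ?_
      exact ((isOpen_iUnion fun t => isOpen_iUnion fun _ => hSopen t).isClosed_compl).isClopenable
    by_cases hBc : B.Countable
    · by_cases hBcc : Bᶜ.Countable
      · exact huniv (by simpa [Set.union_compl_self] using hBc.union hBcc)
      · exact bernstein_no_uncountable_clopenable' hB hclopB.compl hBcc (Or.inr subset_rfl)
    · exact bernstein_no_uncountable_clopenable' hB hclopB hBc (Or.inl subset_rfl)
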